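/- Define rational numbers C_p by C_0 = 1 and Σ_{q=0}^p C_{p−q}/(2q+1)! = 0 for p ≥ 1. For every odd positive integer N and every integer k ≥ 0, the power sum of odd integers S̄_k(N) = 1 + 3^k + 5^k + ⋯ + N^k satisfies S̄_k(N) = (k!/2)·Σ_{q=0}^{⌊k/2⌋} C_q·(N+1)^{k+1−2q}/(k+1−2q)!. -/

import Mathlib

open Finset

/-- Odd-index binomial expansion of `(y+1)^n - (y-1)^n`. -/
lemma odd_binom (n : ℕ) (y : ℚ) :
    (y + 1) ^ n - (y - 1) ^ n
      = ∑ r ∈ Finset.range ((n + 1) / 2),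
          2 * (n.choose (2 * r + 1) : ℚ) * y ^ (n - (2 * r + 1)) := by
  have e1 : (y + 1) ^ n = ∑ i ∈ Finset.range (n + 1),
      (1 : ℚ) ^ i * y ^ (n - i) * n.choose i := by
    rw [add_comm]; exact add_pow 1 y n
  have e2 : (y - 1) ^ n = ∑ i ∈ Finset.range (n + 1),
      (-1 : ℚ) ^ i * y ^ (n - i) * n.choose i := by
    rw [show y - 1 = -1 + y by ring]; exact add_pow (-1) y n
  rw [e1, e2, ← Finset.sum_sub_distrib]
  have hne : ∀ x ∈ Finset.range (n + 1),
      ((1 : ℚ) ^ x * y ^ (n - x) * n.choose x - (-1 : ℚ) ^ x * y ^ (n - x) * n.choose x ≠ 0)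
      → x % 2 = 1 := by
    intro x hx h
    by_contra hodd
    apply h
    obtain ⟨t, rfl⟩ : ∃ t, x = 2 * t := ⟨x / 2, by omega⟩
    rw [pow_mul, pow_mul]
    norm_num
  rw [← Finset.sum_filter_of_ne hne]
  refine Finset.sum_nbij' (fun i => i / 2) (fun r => 2 * r + 1) ?_ ?_ ?_ ?_ ?_
  · intro a ha
    simp only [Finset.mem_filter, Finset.mem_range] at ha ⊢
    omega
  · intro b hb
    simp only [Finset.mem_filter, Finset.mem_range] at hb ⊢
    omega
  · intro a ha
    simp only [Finset.mem_filter, Finset.mem_range] at ha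
    omega
  · intro b _
    omega
  · intro a ha
    simp only [Finset.mem_filter, Finset.mem_range] at ha
    obtain ⟨t, rfl⟩ : ∃ t, a = 2 * t + 1 := ⟨a / 2, by omega⟩
    have ht : (2 * t + 1) / 2 = t := by omega
    rw [ht, pow_succ, pow_mul]
    norm_num
    ring_nf
    rw [mul_comm t 2, pow_mul]
    norm_num
    ring

/-- Triangle reindexing of a double sum. -/
lemma tri_sum {M : Type*} [AddCommMonoid M] (N : ℕ) (g : ℕ → ℕ → M) :
    ∑ q ∈ Finset.range (N + 1), ∑ r ∈ Finset.range (N + 1 - q), g q r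
      = ∑ s ∈ Finset.range (N + 1), ∑ q ∈ Finset.range (s + 1), g q (s - q) := by
  calc ∑ q ∈ Finset.range (N + 1), ∑ r ∈ Finset.range (N + 1 - q), g q r
      = ∑ q ∈ Finset.range (N + 1), ∑ s ∈ Finset.Ico q (N + 1), g q (s - q) := by
        refine Finset.sum_congr rfl fun q hq => ?_
        rw [Finset.sum_Ico_eq_sum_range]
        exact Finset.sum_congr rfl fun r hr => by rw [Nat.add_sub_cancel_left]
    _ = ∑ s ∈ Finset.range (N + 1), ∑ q ∈ Finset.range (s + 1), g q (s - q) := by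
        have h := Finset.sum_Ico_Ico_comm 0 (N + 1) (fun q s => g q (s - q))
        simp only [Nat.Ico_zero_eq_range] at h
        exact h

/-- The key difference identity. -/
lemma keyY (C : ℕ → ℚ) (hC0 : C 0 = 1)
    (hCrec : ∀ p : ℕ, 1 ≤ p →
      ∑ q ∈ Finset.range (p + 1), C (p - q) / (Nat.factorial (2 * q + 1) : ℚ) = 0)
    (k : ℕ) (y : ℚ) :
    ∑ q ∈ Finset.range (k / 2 + 1),
        C q * ((y + 1) ^ (k + 1 - 2 * q) - (y - 1) ^ (k + 1 - 2 * q)) /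
          (Nat.factorial (k + 1 - 2 * q) : ℚ)
      = 2 * y ^ k / (Nat.factorial k : ℚ) := by
  have fac_ne : ∀ n : ℕ, (Nat.factorial n : ℚ) ≠ 0 := fun n => by
    exact_mod_cast (Nat.factorial_pos n).ne'
  have step1 : ∀ q ∈ Finset.range (k / 2 + 1),
      C q * ((y + 1) ^ (k + 1 - 2 * q) - (y - 1) ^ (k + 1 - 2 * q)) /
          (Nat.factorial (k + 1 - 2 * q) : ℚ)
        = ∑ r ∈ Finset.range (k / 2 + 1 - q),
            2 * C q / (Nat.factorial (2 * r + 1) : ℚ) *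
              (y ^ (k - 2 * (q + r)) / (Nat.factorial (k - 2 * (q + r)) : ℚ)) := by
    intro q hq
    rw [Finset.mem_range] at hq
    have h2q : 2 * q ≤ k := by omega
    set n := k + 1 - 2 * q with hn
    have hhalf : (n + 1) / 2 = k / 2 + 1 - q := by omega
    rw [odd_binom, hhalf, Finset.mul_sum, Finset.sum_div]
    refine Finset.sum_congr rfl fun r hr => ?_
    rw [Finset.mem_range] at hr
    have hle : 2 * r + 1 ≤ n := by omega
    have hc : (n.choose (2 * r + 1) : ℚ)
        = (Nat.factorial n : ℚ) /
          ((Nat.factorial (2 * r + 1) : ℚ) * (Nat.factorial (n - (2 * r + 1)) : ℚ)) := by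
      exact Nat.cast_choose ℚ hle
    have he1 : n - (2 * r + 1) = k - 2 * (q + r) := by omega
    rw [hc, he1]
    field_simp
  rw [Finset.sum_congr rfl step1, tri_sum]
  have step2 : ∀ s ∈ Finset.range (k / 2 + 1),
      (∑ q ∈ Finset.range (s + 1),
        2 * C q / (Nat.factorial (2 * (s - q) + 1) : ℚ) *
          (y ^ (k - 2 * (q + (s - q))) / (Nat.factorial (k - 2 * (q + (s - q))) : ℚ)))
      = (if s = 0 then 2 * y ^ k / (Nat.factorial k : ℚ) else 0) := by
    intro s hs
    have hsum : ∑ q ∈ Finset.range (s + 1), C q / (Nat.factorial (2 * (s - q) + 1) : ℚ)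
        = ∑ q ∈ Finset.range (s + 1), C (s - q) / (Nat.factorial (2 * q + 1) : ℚ) := by
      rw [← Finset.sum_range_reflect]
      refine Finset.sum_congr rfl fun j hj => ?_
      rw [Finset.mem_range] at hj
      have h1 : s + 1 - 1 - j = s - j := by omega
      have h2 : s - (s - j) = j := by omega
      rw [h1, h2]
    have hterm : ∀ q ∈ Finset.range (s + 1),
        2 * C q / (Nat.factorial (2 * (s - q) + 1) : ℚ) *
          (y ^ (k - 2 * (q + (s - q))) / (Nat.factorial (k - 2 * (q + (s - q))) : ℚ))
        = (C q / (Nat.factorial (2 * (s - q) + 1) : ℚ)) *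
            (2 * y ^ (k - 2 * s) / (Nat.factorial (k - 2 * s) : ℚ)) := by
      intro q hq
      rw [Finset.mem_range] at hq
      have : q + (s - q) = s := by omega
      rw [this]
      ring
    rw [Finset.sum_congr rfl hterm, ← Finset.sum_mul, hsum]
    by_cases hs0 : s = 0
    · subst hs0
      simp [hC0]
    · rw [hCrec s (by omega)]
      simp [hs0]
  rw [Finset.sum_congr rfl step2, Finset.sum_ite_eq' (Finset.range (k / 2 + 1)) 0]
  simp

/-- The power sum of odd integers `S̄_k(N) = 1 + 3^k + ⋯ + N^k` for odd `N = 2m+1`. -/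
def oddPowerSum (k m : ℕ) : ℚ := ∑ j ∈ Finset.range (m + 1), (2 * (j : ℚ) + 1) ^ k

theorem oddPowerSum_eq_C_expansion (C : ℕ → ℚ) (hC0 : C 0 = 1)
    (hCrec : ∀ p : ℕ, 1 ≤ p → ∑ q ∈ Finset.range (p + 1), C (p - q) / (Nat.factorial (2 * q + 1) : ℚ) = 0) (k m : ℕ) :
    oddPowerSum k m =
      ((Nat.factorial k : ℚ) / 2) *
        ∑ q ∈ Finset.range (k / 2 + 1),
          C q * ((2 * (m : ℚ) + 1) + 1) ^ (k + 1 - 2 * q) /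
            (Nat.factorial (k + 1 - 2 * q) : ℚ) := by
  have fac_ne : (Nat.factorial k : ℚ) ≠ 0 := by
    exact_mod_cast (Nat.factorial_pos k).ne'
  induction m with
  | zero =>
    have h := keyY C hC0 hCrec k 1
    have hz : ∀ q ∈ Finset.range (k / 2 + 1),
        C q * ((1 + 1 : ℚ) ^ (k + 1 - 2 * q) - (1 - 1 : ℚ) ^ (k + 1 - 2 * q)) /
          (Nat.factorial (k + 1 - 2 * q) : ℚ)
        = C q * ((2 * (0 : ℚ) + 1) + 1) ^ (k + 1 - 2 * q) /
          (Nat.factorial (k + 1 - 2 * q) : ℚ) := by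
      intro q hq
      rw [Finset.mem_range] at hq
      have hpos : k + 1 - 2 * q ≠ 0 := by omega
      norm_num [zero_pow hpos]
    rw [Finset.sum_congr rfl hz] at h
    rw [oddPowerSum]
    simp only [zero_add, Finset.sum_range_one, Nat.cast_zero]
    rw [h]
    field_simp
    norm_num
  | succ m ih =>
    have h := keyY C hC0 hCrec k (2 * (m : ℚ) + 3)
    have hsplit : ∑ q ∈ Finset.range (k / 2 + 1),
        C q * ((2 * ((m : ℚ) + 1) + 1) + 1) ^ (k + 1 - 2 * q) /
          (Nat.factorial (k + 1 - 2 * q) : ℚ)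
      = (∑ q ∈ Finset.range (k / 2 + 1),
          C q * ((2 * (m : ℚ) + 1) + 1) ^ (k + 1 - 2 * q) /
            (Nat.factorial (k + 1 - 2 * q) : ℚ))
        + 2 * (2 * (m : ℚ) + 3) ^ k / (Nat.factorial k : ℚ) := by
      rw [← h, ← Finset.sum_add_distrib]
      refine Finset.sum_congr rfl fun q hq => ?_
      have e1 : (2 * ((m : ℚ) + 1) + 1) + 1 = (2 * (m : ℚ) + 3) + 1 := by ring
      have e2 : (2 * (m : ℚ) + 1) + 1 = (2 * (m : ℚ) + 3) - 1 := by ring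
      rw [e1, e2]
      ring
    rw [oddPowerSum, Finset.sum_range_succ, ← oddPowerSum, ih]
    push_cast
    rw [hsplit]
    field_simp
    ring
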